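/- arXiv:2302.07600 — 2 statements merged into one kernel-verified Lean document; each statement's English description precedes it below -/
import Mathlib

section
/- Consider points on a circle (angles in [0,2π)) forming a rotationally asymmetric configuration with no multiplicity, with true leader L (the point with lexicographically smallest clockwise gap sequence). If a new point p is inserted at an empty location and the resulting configuration is still rotationally asymmetric, then the true leader of the new configuration lies on the closed clockwise arc from L to p. -/
open Real

/-- Normalize a real number into `[0, 2π)` (representing an angle on the circle). -/
noncomputable def norm2pi (x : ℝ) : ℝ := (2 * π) * Int.fract (x / (2 * π))

/-- Clockwise angular distance from `a` to `b`, in `[0, 2π)`. -/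
noncomputable def cwAngle (a b : ℝ) : ℝ := norm2pi (b - a)

/-- A configuration: a finite set of angles, all lying in `[0, 2π)`. -/
def OnCircle (s : Finset ℝ) : Prop := ∀ x ∈ s, 0 ≤ x ∧ x < 2 * π

/-- Rotation of a configuration by angle `θ`. -/
noncomputable def rotConf (s : Finset ℝ) (θ : ℝ) : Finset ℝ :=
  s.image (fun x => norm2pi (x + θ))

/-- Rotational asymmetry: no nontrivial rotation preserves the configuration. -/
def RotAsym (s : Finset ℝ) : Prop := ∀ θ ∈ Set.Ioo 0 (2 * π), rotConf s θ ≠ s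

/-- The clockwise gap (angle) sequence of the point `r` in configuration `s`:
consecutive clockwise angular gaps starting at `r`. -/
noncomputable def angleSeq (s : Finset ℝ) (r : ℝ) : List ℝ :=
  let l := ((s.erase r).image (fun x => cwAngle r x)).sort (· ≤ ·)
  List.zipWith (fun u v => u - v) (l ++ [2 * π]) (0 :: l)

/-- Strict lexicographic order on lists of reals. -/
def ListLexLt (l₁ l₂ : List ℝ) : Prop := List.Lex (· < ·) l₁ l₂

/-- `r` is the true leader of `s`: its angle sequence is lexicographically strictly
smaller than that of every other point. -/
def IsTrueLeader (s : Finset ℝ) (r : ℝ) : Prop :=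
  r ∈ s ∧ ∀ x ∈ s, x ≠ r → ListLexLt (angleSeq s r) (angleSeq s x)

/-- The antipodal position of a point `r`. -/
noncomputable def antip (r : ℝ) : ℝ := norm2pi (r + π)

/-- The configuration as seen from `r` assuming its antipodal position is empty. -/
noncomputable def confC0 (s : Finset ℝ) (r : ℝ) : Finset ℝ := s.erase (antip r)

/-- The configuration as seen from `r` assuming its antipodal position is occupied. -/
noncomputable def confC1 (s : Finset ℝ) (r : ℝ) : Finset ℝ := insert (antip r) s

/-- A confused leader: both possibilities `C₀(r)` and `C₁(r)` are rotationally
asymmetric, and `r` is the true leader in exactly one of them. -/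
def ConfusedLeader (s : Finset ℝ) (r : ℝ) : Prop :=
  r ∈ s ∧ RotAsym (confC0 s r) ∧ RotAsym (confC1 s r) ∧
    Xor' (IsTrueLeader (confC0 s r) r) (IsTrueLeader (confC1 s r) r)

/-- A sure leader: `r` is the true leader in every possible (rotationally
asymmetric) configuration among `C₀(r)`, `C₁(r)`. -/
def SureLeader (s : Finset ℝ) (r : ℝ) : Prop :=
  r ∈ s ∧ (RotAsym (confC0 s r) → IsTrueLeader (confC0 s r) r) ∧
    (RotAsym (confC1 s r) → IsTrueLeader (confC1 s r) r)

/-- An expected leader is a sure leader or a confused leader. -/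
def ExpectedLeader (s : Finset ℝ) (r : ℝ) : Prop := SureLeader s r ∨ ConfusedLeader s r

/-- `r'` is the first clockwise neighbor of `r` in `s`. -/
def IsCwNeighbor (s : Finset ℝ) (r r' : ℝ) : Prop :=
  r' ∈ s ∧ r' ≠ r ∧ ∀ x ∈ s, x ≠ r → cwAngle r r' ≤ cwAngle r x

lemma two_pi_pos' : (0:ℝ) < 2 * π := by positivity

lemma norm2pi_nonneg' (x : ℝ) : 0 ≤ norm2pi x :=
  mul_nonneg (le_of_lt two_pi_pos') (Int.fract_nonneg _)

lemma norm2pi_lt' (x : ℝ) : norm2pi x < 2 * π := by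
  have h := Int.fract_lt_one (x / (2 * π))
  have := two_pi_pos'
  calc (2*π) * Int.fract (x / (2*π)) < (2*π) * 1 := by
        exact (mul_lt_mul_iff_right₀ this).mpr h
    _ = 2*π := mul_one _

lemma norm2pi_eq_self' {x : ℝ} (h0 : 0 ≤ x) (h2 : x < 2 * π) : norm2pi x = x := by
  unfold norm2pi
  rw [Int.fract_eq_self.mpr ⟨div_nonneg h0 (le_of_lt two_pi_pos'), (div_lt_one two_pi_pos').mpr h2⟩]
  field_simp

lemma norm2pi_add_int' (x : ℝ) (k : ℤ) : norm2pi (x + 2 * π * k) = norm2pi x := by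
  unfold norm2pi
  have : (x + 2 * π * k) / (2 * π) = x / (2*π) + k := by
    field_simp
  rw [this, Int.fract_add_intCast]

lemma norm2pi_spec' (x : ℝ) : x = norm2pi x + 2 * π * ⌊x / (2*π)⌋ := by
  unfold norm2pi
  rw [Int.fract]
  have h := two_pi_pos'
  field_simp
  ring

lemma cwAngle_self' (r : ℝ) : cwAngle r r = 0 := by
  simp [cwAngle, norm2pi]

lemma cwAngle_nonneg' (a b : ℝ) : 0 ≤ cwAngle a b := norm2pi_nonneg' _
lemma cwAngle_lt' (a b : ℝ) : cwAngle a b < 2 * π := norm2pi_lt' _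

lemma cwAngle_inj' {r x y : ℝ} (hx0 : 0 ≤ x) (hx2 : x < 2*π) (hy0 : 0 ≤ y)
    (hy2 : y < 2*π) (h : cwAngle r x = cwAngle r y) : x = y := by
  unfold cwAngle norm2pi at h
  have hne : (2*π) ≠ 0 := ne_of_gt two_pi_pos'
  have h2 : Int.fract ((x - r) / (2*π)) = Int.fract ((y - r) / (2*π)) :=
    mul_left_cancel₀ hne h
  rw [Int.fract_eq_fract] at h2
  obtain ⟨z, hz⟩ := h2
  have hpi := two_pi_pos'
  have hxy : x - y = 2*π*(z:ℝ) := by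
    field_simp at hz
    nlinarith [hz]
  have h1 : (z:ℝ) < 1 := by nlinarith
  have h2 : (-1:ℝ) < (z:ℝ) := by nlinarith
  have hz1 : z < 1 := by exact_mod_cast h1
  have hz2 : (-1:ℤ) < z := by exact_mod_cast h2
  have : z = 0 := by omega
  rw [this] at hxy; push_cast at hxy; linarith

lemma cwAngle_shift' {L L' x : ℝ} (h : cwAngle L x < cwAngle L L') :
    cwAngle L' x = cwAngle L x + (2*π - cwAngle L L') := by
  have e1 := norm2pi_spec' (x - L)
  have e2 := norm2pi_spec' (L' - L)
  have he0 : 0 ≤ cwAngle L x := cwAngle_nonneg' _ _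
  have hd2 : cwAngle L L' < 2*π := cwAngle_lt' _ _
  have hkey : x - L' = (cwAngle L x + (2*π - cwAngle L L')) +
      2*π*((⌊(x-L)/(2*π)⌋ - ⌊(L'-L)/(2*π)⌋ - 1 : ℤ)) := by
    push_cast
    unfold cwAngle at *
    linarith [e1, e2]
  rw [cwAngle, hkey, norm2pi_add_int', norm2pi_eq_self' (by linarith) (by linarith)]

lemma lex_cons_inv' {r : ℝ → ℝ → Prop} {a b : ℝ} {l₁ l₂ : List ℝ}
    (h : List.Lex r (a::l₁) (b::l₂)) : r a b ∨ (a = b ∧ List.Lex r l₁ l₂) := by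
  cases h with
  | rel h => exact Or.inl h
  | cons h => exact Or.inr ⟨rfl, h⟩

lemma lex_asymm' : ∀ {l₁ l₂ : List ℝ}, List.Lex (· < ·) l₁ l₂ →
    List.Lex (· < ·) l₂ l₁ → False := by
  intro l₁ l₂ h
  induction h with
  | nil => intro h2; cases h2
  | @cons a l₁ l₂ h ih =>
    intro h2
    rcases lex_cons_inv' h2 with h3 | ⟨_, h3⟩
    · exact lt_irrefl _ h3
    · exact ih h3
  | @rel a l₁ b l₂ h =>
    intro h2
    rcases lex_cons_inv' h2 with h3 | ⟨h3, _⟩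
    · exact lt_irrefl _ (lt_trans h h3)
    · exact lt_irrefl _ (h3 ▸ h)

lemma lex_of_lex_diffs' : ∀ (l₁ l₂ : List ℝ) (c : ℝ), l₁.length = l₂.length →
    List.Lex (· < ·) (List.zipWith (fun u v => u - v) (l₁ ++ [2*π]) (c :: l₁))
      (List.zipWith (fun u v => u - v) (l₂ ++ [2*π]) (c :: l₂)) →
    List.Lex (· < ·) l₁ l₂ := by
  intro l₁
  induction l₁ with
  | nil =>
    intro l₂ c hlen h
    obtain rfl : l₂ = [] := List.length_eq_zero_iff.mp hlen.symm
    have h' : List.Lex (· < ·) [2*π - c] [2*π - c] := h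
    rcases lex_cons_inv' h' with h2 | ⟨_, h2⟩
    · exact absurd h2 (lt_irrefl _)
    · cases h2
  | cons x t₁ ih =>
    intro l₂ c hlen h
    match l₂ with
    | [] => simp at hlen
    | y :: t₂ =>
      simp only [List.cons_append, List.zipWith_cons_cons] at h
      rcases lex_cons_inv' h with hr | ⟨heq, h'⟩
      · exact List.Lex.rel (by linarith)
      · have hxy : x = y := by linarith
        subst hxy
        exact List.Lex.cons (ih t₂ x (by simpa using hlen) h')

lemma lex_orderedInsert' : ∀ (A B : List ℝ) (a b : ℝ),
    B.Pairwise (· ≤ ·) → A.length = B.length → List.Lex (· < ·) A B →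
    A.countP (fun z => decide (z < a)) < B.countP (fun z => decide (z < b)) →
    a ∉ A →
    List.Lex (· < ·) (List.orderedInsert (· ≤ ·) a A) (List.orderedInsert (· ≤ ·) b B) := by
  intro A
  induction A with
  | nil =>
    intro B a b hB hlen hab hcount ha
    obtain rfl : B = [] := List.length_eq_zero_iff.mp hlen.symm
    simp at hcount
  | cons x A₀ ih =>
    intro B a b hB hlen hab hcount ha
    match B with
    | [] => simp at hlen
    | y :: B₀ =>
      have hyB : ∀ z ∈ B₀, y ≤ z := by
        intro z hz
        exact (List.pairwise_cons.mp hB).1 z hz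
      have hyb : y < b := by
        by_contra hc
        push_neg at hc
        have : (y :: B₀).countP (fun z => decide (z < b)) = 0 := by
          rw [List.countP_eq_zero]
          intro z hz
          simp only [decide_eq_true_eq]
          rcases List.mem_cons.mp hz with rfl | hz'
          · exact not_lt.mpr hc
          · exact not_lt.mpr (le_trans hc (hyB z hz'))
        omega
      have hBins : List.orderedInsert (· ≤ ·) b (y :: B₀)
          = y :: List.orderedInsert (· ≤ ·) b B₀ := by
        rw [List.orderedInsert, if_neg (not_le.mpr hyb)]
      rw [hBins]
      have hxy : x ≤ y := by
        rcases lex_cons_inv' hab with h | ⟨h, _⟩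
        · exact le_of_lt h
        · exact le_of_eq h
      by_cases hax : a ≤ x
      · have hax' : a < x := lt_of_le_of_ne hax (fun h => ha (h ▸ List.mem_cons_self))
        rw [List.orderedInsert, if_pos hax]
        exact List.Lex.rel (lt_of_lt_of_le hax' hxy)
      · push_neg at hax
        rw [List.orderedInsert, if_neg (not_le.mpr hax)]
        rcases lex_cons_inv' hab with h | ⟨h, htail⟩
        · exact List.Lex.rel h
        · subst h
          apply List.Lex.cons
          apply ih B₀ a b (List.pairwise_cons.mp hB).2 (by simpa using hlen) htail _ 
            (fun hmem => ha (List.mem_cons_of_mem _ hmem))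
          have h1 : (x :: A₀).countP (fun z => decide (z < a))
              = A₀.countP (fun z => decide (z < a)) + 1 :=
            List.countP_cons_of_pos (by simpa using hax)
          have h2 : (x :: B₀).countP (fun z => decide (z < b))
              = B₀.countP (fun z => decide (z < b)) + 1 :=
            List.countP_cons_of_pos (by simpa using hyb)
          omega

noncomputable def Dlist (s : Finset ℝ) (r : ℝ) : List ℝ :=
  ((s.erase r).image (fun x => cwAngle r x)).sort (· ≤ ·)

lemma injOn_cw {s : Finset ℝ} (hs : OnCircle s) (r : ℝ) :
    Set.InjOn (fun x => cwAngle r x) ↑(s.erase r) := by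
  intro x hx y hy h
  simp only [Finset.coe_erase, Set.mem_diff, Finset.mem_coe] at hx hy
  obtain ⟨hx1, hx2⟩ := hs x hx.1
  obtain ⟨hy1, hy2⟩ := hs y hy.1
  exact cwAngle_inj' hx1 hx2 hy1 hy2 h

lemma length_Dlist {s : Finset ℝ} (hs : OnCircle s) (r : ℝ) :
    (Dlist s r).length = (s.erase r).card := by
  rw [Dlist, Finset.length_sort, Finset.card_image_of_injOn (injOn_cw hs r)]

lemma sorted_Dlist (s : Finset ℝ) (r : ℝ) : (Dlist s r).Pairwise (· ≤ ·) :=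
  Finset.pairwise_sort _ _

lemma Dlist_insert {s : Finset ℝ} (hs : OnCircle s) {r p : ℝ} (hr : r ∈ s)
    (hpn : p ∉ s) (hp0 : 0 ≤ p) (hp2 : p < 2*π) :
    Dlist (insert p s) r = List.orderedInsert (· ≤ ·) (cwAngle r p) (Dlist s r) := by
  have hpr : p ≠ r := fun h => hpn (h ▸ hr)
  have herase : (insert p s).erase r = insert p (s.erase r) := by
    rw [Finset.erase_insert_of_ne hpr]  -- guess name
  have hfpnot : cwAngle r p ∉ (s.erase r).image (fun x => cwAngle r x) := by
    intro hmem
    obtain ⟨x, hx, hfx⟩ := Finset.mem_image.mp hmem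
    obtain ⟨hx1, hx2⟩ := hs x (Finset.mem_of_mem_erase hx)
    exact hpn ((cwAngle_inj' hp0 hp2 hx1 hx2 hfx.symm) ▸ Finset.mem_of_mem_erase hx)
  apply List.Perm.eq_of_pairwise' (sorted_Dlist _ _)
    ((sorted_Dlist s r).orderedInsert _ _)
  · have hperm : List.Perm (Dlist (insert p s) r) (cwAngle r p :: Dlist s r) := by
      rw [← Multiset.coe_eq_coe, ← Multiset.cons_coe]
      unfold Dlist
      rw [Finset.sort_eq, Finset.sort_eq, herase, Finset.image_insert,
        Finset.insert_val_of_notMem hfpnot]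
    exact hperm.trans (List.perm_orderedInsert _ _ _).symm

lemma countP_Dlist {s : Finset ℝ} (hs : OnCircle s) (r a : ℝ) :
    (Dlist s r).countP (fun z => decide (z < a))
      = ((s.erase r).filter (fun x => cwAngle r x < a)).card := by
  unfold Dlist
  rw [← Multiset.coe_countP]
  rw [Finset.sort_eq]
  rw [Finset.image_val_of_injOn (injOn_cw hs r)]
  rw [Multiset.countP_map]
  rfl

lemma angleSeq_eq_diffs (s : Finset ℝ) (r : ℝ) :
    angleSeq s r = List.zipWith (fun u v => u - v) (Dlist s r ++ [2 * π]) (0 :: Dlist s r) := rfl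


/-- inserting a new point `p` into a rotationally asymmetric
configuration with true leader `L` (keeping asymmetry) forces the new true leader
to lie on the closed clockwise arc from `L` to `p`. -/
theorem new_leader_in_arc_of_insert
    (s : Finset ℝ) (hcirc : OnCircle s) (hasym : RotAsym s)
    (L : ℝ) (hL : IsTrueLeader s L)
    (p : ℝ) (hp : p ∉ s) (hp0 : 0 ≤ p) (hp2 : p < 2 * π)
    (hasym' : RotAsym (insert p s)) :
    ∀ L' : ℝ, IsTrueLeader (insert p s) L' → cwAngle L L' ≤ cwAngle L p := by
  intro L' hL'
  by_contra hgt
  push_neg at hgt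
  have hLs : L ∈ s := hL.1
  obtain ⟨hL0, hL2⟩ := hcirc L hLs
  have hd0 : 0 < cwAngle L p := by
    rcases lt_or_eq_of_le (cwAngle_nonneg' L p) with h | h
    · exact h
    · exfalso
      have hpL : p = L := cwAngle_inj' hp0 hp2 hL0 hL2 (by rw [← h, cwAngle_self'])
      exact hp (hpL ▸ hLs)
  have hL'ne_p : L' ≠ p := fun h => absurd hgt (by rw [h]; exact lt_irrefl _)
  have hL's : L' ∈ s := by
    rcases Finset.mem_insert.mp hL'.1 with h | h
    · exact absurd h hL'ne_p
    · exact h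
  have hL'neL : L' ≠ L := by
    intro h
    rw [h, cwAngle_self'] at hgt
    exact absurd hgt (not_lt.mpr (cwAngle_nonneg' _ _))
  obtain ⟨hL'0, hL'2⟩ := hcirc L' hL's
  have hold : ListLexLt (angleSeq s L) (angleSeq s L') := hL.2 L' hL's hL'neL
  have hnew : ListLexLt (angleSeq (insert p s) L') (angleSeq (insert p s) L) :=
    hL'.2 L (Finset.mem_insert_of_mem hLs) (Ne.symm hL'neL)
  have hcirc' : OnCircle (insert p s) := by
    intro x hx
    rcases Finset.mem_insert.mp hx with rfl | h
    · exact ⟨hp0, hp2⟩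
    · exact hcirc x h
  have hlen_old : (Dlist s L).length = (Dlist s L').length := by
    rw [length_Dlist hcirc, length_Dlist hcirc, Finset.card_erase_of_mem hLs,
      Finset.card_erase_of_mem hL's]
  have hlen_new : (Dlist (insert p s) L').length = (Dlist (insert p s) L).length := by
    rw [length_Dlist hcirc', length_Dlist hcirc',
      Finset.card_erase_of_mem (Finset.mem_insert_of_mem hL's),
      Finset.card_erase_of_mem (Finset.mem_insert_of_mem hLs)]
  rw [ListLexLt, angleSeq_eq_diffs, angleSeq_eq_diffs] at hold hnew
  have holdD : List.Lex (· < ·) (Dlist s L) (Dlist s L') :=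
    lex_of_lex_diffs' _ _ 0 hlen_old hold
  have hnewD : List.Lex (· < ·) (Dlist (insert p s) L') (Dlist (insert p s) L) :=
    lex_of_lex_diffs' _ _ 0 hlen_new hnew
  have hshift_p : cwAngle L' p = cwAngle L p + (2*π - cwAngle L L') := cwAngle_shift' hgt
  have hcnt : (Dlist s L).countP (fun z => decide (z < cwAngle L p))
      < (Dlist s L').countP (fun z => decide (z < cwAngle L' p)) := by
    rw [countP_Dlist hcirc, countP_Dlist hcirc]
    apply Finset.card_lt_card
    rw [Finset.ssubset_def]
    constructor
    · intro x hx
      rw [Finset.mem_filter, Finset.mem_erase] at hx ⊢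
      obtain ⟨⟨hxL, hxs⟩, hxd⟩ := hx
      obtain ⟨hx0, hx2⟩ := hcirc x hxs
      have hxd' : cwAngle L x < cwAngle L L' := lt_trans hxd hgt
      have hxL' : x ≠ L' := by
        intro h
        rw [h] at hxd'
        exact lt_irrefl _ hxd'
      have hshift_x : cwAngle L' x = cwAngle L x + (2*π - cwAngle L L') := cwAngle_shift' hxd'
      exact ⟨⟨hxL', hxs⟩, by rw [hshift_x, hshift_p]; linarith⟩
    · intro hsub
      have hLmem : L ∈ (s.erase L').filter (fun x => cwAngle L' x < cwAngle L' p) := by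
        rw [Finset.mem_filter, Finset.mem_erase]
        have h0 : cwAngle L L = 0 := cwAngle_self' L
        have hshift_L : cwAngle L' L = cwAngle L L + (2*π - cwAngle L L') :=
          cwAngle_shift' (by rw [h0]; linarith [cwAngle_nonneg' L p])
        exact ⟨⟨Ne.symm hL'neL, hLs⟩, by rw [hshift_L, hshift_p, h0]; linarith⟩
      have := hsub hLmem
      rw [Finset.mem_filter, Finset.mem_erase] at this
      exact this.1.1 rfl
  have haA : cwAngle L p ∉ Dlist s L := by
    intro h
    rw [Dlist, Finset.mem_sort] at h
    obtain ⟨x, hx, hfx⟩ := Finset.mem_image.mp h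
    obtain ⟨hx0, hx2⟩ := hcirc x (Finset.mem_of_mem_erase hx)
    exact hp ((cwAngle_inj' hp0 hp2 hx0 hx2 hfx.symm) ▸ Finset.mem_of_mem_erase hx)
  have hkey := lex_orderedInsert' (Dlist s L) (Dlist s L') (cwAngle L p) (cwAngle L' p)
    (sorted_Dlist s L') hlen_old holdD hcnt haA
  rw [← Dlist_insert hcirc hLs hp hp0 hp2, ← Dlist_insert hcirc hL's hp hp0 hp2] at hkey
  exact lex_asymm' hnewD hkey
end

section
/- Let C be a rotationally asymmetric configuration of distinct points on a circle with true leader L. If r is an expected leader of C (a sure leader or confused leader) distinct from L, then the clockwise angular distance from L to r is at least π. -/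
open Real

namespace Stmt9


lemma two_pi_pos : (0:ℝ) < 2 * π := by positivity

lemma norm2pi_nonneg (x : ℝ) : 0 ≤ norm2pi x :=
  mul_nonneg two_pi_pos.le (Int.fract_nonneg _)

lemma norm2pi_lt (x : ℝ) : norm2pi x < 2 * π := by
  have := Int.fract_lt_one (x / (2 * π))
  calc norm2pi x < (2*π) * 1 := mul_lt_mul_of_pos_left this two_pi_pos
    _ = 2*π := mul_one _

lemma norm2pi_eq_self {x : ℝ} (h1 : 0 ≤ x) (h2 : x < 2 * π) : norm2pi x = x := by
  unfold norm2pi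
  rw [Int.fract_eq_self.mpr ⟨by positivity, by rw [div_lt_one two_pi_pos]; exact h2⟩]
  field_simp

lemma norm2pi_eq_iff {u v : ℝ} : norm2pi u = norm2pi v ↔ ∃ k : ℤ, u - v = 2 * π * k := by
  have h2 : (2*π) ≠ 0 := two_pi_pos.ne'
  unfold norm2pi
  constructor
  · intro h
    have h' : Int.fract (u / (2*π)) = Int.fract (v / (2*π)) := mul_left_cancel₀ h2 h
    obtain ⟨k, hk⟩ := Int.fract_eq_fract.mp h'
    refine ⟨k, ?_⟩
    have : u - v = (u/(2*π) - v/(2*π)) * (2*π) := by field_simp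
    rw [this, hk]; ring
  · rintro ⟨k, hk⟩
    have : u / (2*π) - v / (2*π) = (k:ℝ) := by
      field_simp
      linarith [hk]
    rw [Int.fract_eq_fract.mpr ⟨k, this⟩]

lemma norm2pi_inj {u v : ℝ} (h : norm2pi u = norm2pi v) (hb : |u - v| < 2 * π) : u = v := by
  obtain ⟨k, hk⟩ := norm2pi_eq_iff.mp h
  have hk' : |(k:ℝ)| < 1 := by
    rw [hk, abs_mul, abs_of_pos two_pi_pos] at hb
    have := (mul_lt_mul_iff_right₀ two_pi_pos).mp (by linarith [hb] : 2*π * |(k:ℝ)| < 2*π * 1)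
    linarith
  have hk0 : (k:ℤ) = 0 := by
    have h1 : ((|k| : ℤ):ℝ) < 1 := by push_cast; exact hk'
    have h2 : |k| < 1 := by exact_mod_cast h1
    have := abs_lt.mp h2
    omega
  rw [hk0] at hk; push_cast at hk; linarith

lemma norm2pi_sub (a : ℝ) : norm2pi a = a - 2 * π * ⌊a / (2*π)⌋ := by
  unfold norm2pi
  rw [Int.fract, mul_sub, mul_div_cancel₀ _ two_pi_pos.ne']

lemma norm2pi_add_norm2pi (a b : ℝ) : norm2pi (norm2pi a + b) = norm2pi (a + b) := by
  refine norm2pi_eq_iff.mpr ⟨-⌊a / (2*π)⌋, ?_⟩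
  rw [norm2pi_sub a]
  push_cast
  ring


-- stage 2
lemma cw_nonneg (a b : ℝ) : 0 ≤ cwAngle a b := norm2pi_nonneg _
lemma cw_lt (a b : ℝ) : cwAngle a b < 2 * π := norm2pi_lt _

lemma add_cw {x : ℝ} (p : ℝ) (hx1 : 0 ≤ x) (hx2 : x < 2 * π) :
    norm2pi (p + cwAngle p x) = x := by
  unfold cwAngle
  rw [add_comm, norm2pi_add_norm2pi, sub_add_cancel, norm2pi_eq_self hx1 hx2]

noncomputable def bset (t : Finset ℝ) (p : ℝ) : Finset ℝ :=
  ((t.erase p).image (fun x => cwAngle p x)) ∪ {2 * π}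

lemma two_pi_mem_bset (t : Finset ℝ) (p : ℝ) : 2 * π ∈ bset t p :=
  Finset.mem_union_right _ (Finset.mem_singleton_self _)

lemma bset_le {t : Finset ℝ} {p y : ℝ} (h : y ∈ bset t p) : y ≤ 2 * π := by
  rcases Finset.mem_union.mp h with h | h
  · obtain ⟨x, _, rfl⟩ := Finset.mem_image.mp h
    exact (cw_lt _ _).le
  · exact (Finset.mem_singleton.mp h).le

lemma mem_bset {t : Finset ℝ} (ht : OnCircle t) {p : ℝ} (hp1 : 0 ≤ p) (hp2 : p < 2 * π)
    {c : ℝ} : c ∈ bset t p ↔ (c = 2 * π ∨ (0 < c ∧ c < 2 * π ∧ norm2pi (p + c) ∈ t)) := by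
  constructor
  · intro h
    rcases Finset.mem_union.mp h with h | h
    · obtain ⟨x, hx, rfl⟩ := Finset.mem_image.mp h
      obtain ⟨hxp, hxt⟩ := Finset.mem_erase.mp hx
      obtain ⟨hx1, hx2⟩ := ht x hxt
      right
      have hrec : norm2pi (p + cwAngle p x) = x := add_cw p hx1 hx2
      refine ⟨?_, cw_lt _ _, by rw [hrec]; exact hxt⟩
      rcases lt_or_eq_of_le (cw_nonneg p x) with h0 | h0
      · exact h0
      · exfalso; apply hxp
        rw [← hrec, ← h0, add_zero, norm2pi_eq_self hp1 hp2]
    · left; exact Finset.mem_singleton.mp h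
  · rintro (rfl | ⟨hc1, hc2, hmem⟩)
    · exact two_pi_mem_bset t p
    · refine Finset.mem_union_left _ (Finset.mem_image.mpr ⟨norm2pi (p + c), ?_, ?_⟩)
      · refine Finset.mem_erase.mpr ⟨?_, hmem⟩
        intro heq
        have : p + c = p := norm2pi_inj (by rw [heq, norm2pi_eq_self hp1 hp2])
          (by rw [add_sub_cancel_left, abs_of_pos hc1]; exact hc2)
        linarith
      · show norm2pi (norm2pi (p + c) - p) = c
        have : norm2pi (p + c) - p = norm2pi (p + c) + (-p) := by ring
        rw [this, norm2pi_add_norm2pi]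
        have : p + c + -p = c := by ring
        rw [this, norm2pi_eq_self hc1.le hc2]

lemma bset_pos {t : Finset ℝ} (ht : OnCircle t) {p : ℝ} (hp1 : 0 ≤ p) (hp2 : p < 2 * π)
    {y : ℝ} (h : y ∈ bset t p) : 0 < y := by
  rcases (mem_bset ht hp1 hp2).mp h with rfl | h
  · exact two_pi_pos
  · exact h.1

def glist : ℝ → List ℝ → List ℝ
  | _, [] => []
  | prev, h :: t => (h - prev) :: glist h t

lemma zip_glist (l : List ℝ) (b prev : ℝ) :
    List.zipWith (fun u v => u - v) (l ++ [b]) (prev :: l) = glist prev (l ++ [b]) := by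
  induction l generalizing prev with
  | nil => simp [glist]
  | cons h tl ih =>
    simp only [List.cons_append, List.zipWith_cons_cons, glist, List.append_eq, ih]

lemma sort_union_top {A : Finset ℝ} {b : ℝ} (hb : ∀ x ∈ A, x < b) :
    (A ∪ {b}).sort (· ≤ ·) = A.sort (· ≤ ·) ++ [b] := by
  have hbA : b ∉ A := fun h => lt_irrefl b (hb b h)
  have hins : A ∪ {b} = insert b A := by
    ext x; simp [Finset.mem_union, Finset.mem_insert, or_comm]
  have p1 : List.Perm ((A ∪ {b}).sort (· ≤ ·)) ((A ∪ {b}).toList) := Finset.sort_perm_toList _ _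
  have p2 : List.Perm ((A ∪ {b}).toList) (b :: A.toList) := by
    rw [hins]; exact Finset.toList_insert hbA
  have p3 : List.Perm (b :: A.toList) (b :: A.sort (· ≤ ·)) :=
    List.Perm.cons _ (Finset.sort_perm_toList _ _).symm
  have p4 : List.Perm (b :: A.sort (· ≤ ·)) (A.sort (· ≤ ·) ++ [b]) :=
    (List.perm_append_singleton _ _).symm
  refine List.Perm.eq_of_pairwise (fun a b _ _ h1 h2 => le_antisymm h1 h2)
    (Finset.pairwise_sort _ _) ?_ ((p1.trans p2).trans (p3.trans p4))
  rw [List.pairwise_append]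
  refine ⟨Finset.pairwise_sort _ _, List.pairwise_singleton _ _, ?_⟩
  intro x hx y hy
  rw [List.mem_singleton] at hy
  subst hy
  exact (hb x (Finset.mem_sort (α := ℝ) (· ≤ ·) |>.mp hx)).le

lemma angleSeq_eq_glist (t : Finset ℝ) (p : ℝ) :
    angleSeq t p = glist 0 ((bset t p).sort (· ≤ ·)) := by
  unfold angleSeq bset
  have hb : ∀ x ∈ (t.erase p).image (fun x => cwAngle p x), x < 2 * π := by
    intro x hx
    obtain ⟨y, _, rfl⟩ := Finset.mem_image.mp hx
    exact cw_lt _ _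
  rw [sort_union_top hb, zip_glist]


lemma glist_cons (prev h : ℝ) (t : List ℝ) : glist prev (h :: t) = (h - prev) :: glist h t := rfl

lemma glist_lex : ∀ (m₂ m₁ : List ℝ) (prev x : ℝ), m₁.Pairwise (· < ·) → m₂.Pairwise (· < ·) →
    x ∈ m₂ → x ∉ m₁ → (∀ y, y < x → (y ∈ m₁ ↔ y ∈ m₂)) → (∃ z ∈ m₁, x < z) →
    List.Lex (· < ·) (glist prev m₂) (glist prev m₁)
  | [], _, _, _, _, _, hx, _, _, _ => absurd hx List.not_mem_nil
  | _ :: _, [], _, _, _, _, _, _, _, ⟨z, hz, _⟩ => absurd hz List.not_mem_nil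
  | h₂ :: t₂, h₁ :: t₁, prev, x, hs₁, hs₂, hx₂, hx₁, hagree, ⟨z, hz, hxz⟩ => by
    have hh₂x : h₂ ≤ x := by
      rcases List.mem_cons.mp hx₂ with rfl | hx₂'
      · exact le_refl x
      · exact (List.rel_of_pairwise_cons hs₂ hx₂').le
    rw [glist_cons, glist_cons]
    rcases lt_trichotomy h₁ h₂ with hlt | heq | hgt
    · exfalso
      have hh₁ : h₁ ∈ h₂ :: t₂ := (hagree h₁ (lt_of_lt_of_le hlt hh₂x)).mp List.mem_cons_self
      rcases List.mem_cons.mp hh₁ with he | hh₁'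
      · exact lt_irrefl _ (he ▸ hlt)
      · exact lt_irrefl _ (hlt.trans (List.rel_of_pairwise_cons hs₂ hh₁'))
    · subst heq
      have hx₂' : x ∈ t₂ := by
        rcases List.mem_cons.mp hx₂ with rfl | hx₂'
        · exact absurd List.mem_cons_self hx₁
        · exact hx₂'
      refine List.Lex.cons ?_
      refine glist_lex t₂ t₁ h₁ x hs₁.of_cons hs₂.of_cons hx₂' ?_ ?_ ?_
      · exact fun h => hx₁ (List.mem_cons_of_mem _ h)
      · intro y hy
        constructor
        · intro hyt₁
          rcases List.mem_cons.mp ((hagree y hy).mp (List.mem_cons_of_mem _ hyt₁)) with heq2 | h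
          · exact absurd hyt₁ (heq2 ▸ fun hc => lt_irrefl _ (List.rel_of_pairwise_cons hs₁ hc))
          · exact h
        · intro hyt₂
          rcases List.mem_cons.mp ((hagree y hy).mpr (List.mem_cons_of_mem _ hyt₂)) with heq2 | h
          · exact absurd hyt₂ (heq2 ▸ fun hc => lt_irrefl _ (List.rel_of_pairwise_cons hs₂ hc))
          · exact h
      · refine ⟨z, ?_, hxz⟩
        rcases List.mem_cons.mp hz with rfl | hz'
        · exact absurd hxz (not_lt.mpr hh₂x)
        · exact hz'
    · have hxh₂ : x = h₂ := by
        rcases lt_or_eq_of_le hh₂x with hlt2 | he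
        · exfalso
          rcases List.mem_cons.mp ((hagree h₂ hlt2).mpr List.mem_cons_self) with heq2 | h
          · exact lt_irrefl _ (heq2 ▸ hgt)
          · exact lt_irrefl _ (hgt.trans (List.rel_of_pairwise_cons hs₁ h))
        · exact he.symm
      exact List.Lex.rel (by linarith)

lemma lexlt_asymm {l₁ l₂ : List ℝ} (h1 : ListLexLt l₁ l₂) (h2 : ListLexLt l₂ l₁) : False := by
  exact _root_.asymm (r := List.Lex ((· < ·) : ℝ → ℝ → Prop)) h1 h2

lemma beats {t : Finset ℝ} {p q x : ℝ} (hxq : x ∈ bset t q) (hxp : x ∉ bset t p)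
    (hagree : ∀ y, y < x → (y ∈ bset t p ↔ y ∈ bset t q)) :
    ListLexLt (angleSeq t q) (angleSeq t p) := by
  rw [ListLexLt, angleSeq_eq_glist, angleSeq_eq_glist]
  have hx2π : x < 2 * π := by
    rcases lt_or_eq_of_le (bset_le hxq) with h | h
    · exact h
    · exact absurd (h ▸ two_pi_mem_bset t p) hxp
  refine glist_lex _ _ 0 x (Finset.sortedLT_sort _).pairwise (Finset.sortedLT_sort _).pairwise ?_ ?_ ?_ ?_
  · exact (Finset.mem_sort _).mpr hxq
  · exact fun h => hxp ((Finset.mem_sort _).mp h)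
  · intro y hy
    rw [Finset.mem_sort, Finset.mem_sort]
    exact hagree y hy
  · exact ⟨2 * π, (Finset.mem_sort _).mpr (two_pi_mem_bset t p), hx2π⟩

lemma extract {t : Finset ℝ} {p q : ℝ} (h : ListLexLt (angleSeq t p) (angleSeq t q)) :
    ∃ m, m ∈ bset t p ∧ m ∉ bset t q ∧ ∀ y, y < m → (y ∈ bset t p ↔ y ∈ bset t q) := by
  classical
  by_cases heq : bset t p = bset t q
  · exfalso
    have : angleSeq t p = angleSeq t q := by
      rw [angleSeq_eq_glist, angleSeq_eq_glist, heq]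
    rw [this] at h
    exact lexlt_asymm h h
  · have hne : (symmDiff (bset t p) (bset t q)).Nonempty := by
      rw [Finset.nonempty_iff_ne_empty]
      intro hc
      exact heq (by simpa [symmDiff_eq_bot] using hc)
    set m := (symmDiff (bset t p) (bset t q)).min' hne with hm
    have hmem := (symmDiff (bset t p) (bset t q)).min'_mem hne
    have hagree : ∀ y, y < m → (y ∈ bset t p ↔ y ∈ bset t q) := by
      intro y hy
      constructor
      · intro h1
        by_contra h2
        exact absurd (Finset.min'_le _ y (Finset.mem_symmDiff.mpr (Or.inl ⟨h1, h2⟩)))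
          (not_le.mpr hy)
      · intro h1
        by_contra h2
        exact absurd (Finset.min'_le _ y (Finset.mem_symmDiff.mpr (Or.inr ⟨h1, h2⟩)))
          (not_le.mpr hy)
    rcases Finset.mem_symmDiff.mp hmem with ⟨h1, h2⟩ | ⟨h1, h2⟩
    · exact ⟨m, h1, h2, hagree⟩
    · exact absurd (beats h1 h2 hagree) (fun hc => lexlt_asymm h hc)


lemma main_insert (s : Finset ℝ) (hcirc : OnCircle s) (L r : ℝ) (hL : IsTrueLeader s L)
    (hr : r ∈ s) (hrL : r ≠ L) (hdπ : cwAngle L r < π)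
    (ha : antip r ∉ s) (hlead : IsTrueLeader (insert (antip r) s) r) : False := by
  have hπ := Real.pi_pos
  have hπ2 : π < 2 * π := by linarith
  set d := cwAngle L r with hdd
  have hd0 : 0 ≤ d := cw_nonneg _ _
  obtain ⟨hL1, hL2⟩ := hcirc L hL.1
  obtain ⟨hr1, hr2⟩ := hcirc r hr
  have hrLn : r = norm2pi (L + d) := (add_cw L hr1 hr2).symm
  have hdne : 0 < d := by
    rcases lt_or_eq_of_le hd0 with h | h
    · exact h
    · exfalso; apply hrL
      rw [hrLn, ← h, add_zero, norm2pi_eq_self hL1 hL2]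
  have hd2π : d < 2 * π := by linarith
  have haL : antip r = norm2pi (L + (d + π)) := by
    rw [antip, hrLn, norm2pi_add_norm2pi, add_assoc]
  set t := insert (antip r) s with ht
  have hOC : OnCircle t := by
    intro x hx
    rcases Finset.mem_insert.mp hx with rfl | hx
    · exact ⟨norm2pi_nonneg _, norm2pi_lt _⟩
    · exact hcirc x hx
  -- basic membership characterizations
  have memPs : ∀ c, 0 < c → c < 2*π → (c ∈ bset s L ↔ norm2pi (L + c) ∈ s) := by
    intro c h1 h2
    rw [mem_bset hcirc hL1 hL2]
    constructor
    · rintro (rfl | ⟨_, _, h⟩)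
      · exact absurd h2 (lt_irrefl _)
      · exact h
    · exact fun h => Or.inr ⟨h1, h2, h⟩
  have memQs : ∀ c, 0 < c → c < 2*π → (c ∈ bset s r ↔ norm2pi (r + c) ∈ s) := by
    intro c h1 h2
    rw [mem_bset hcirc hr1 hr2]
    constructor
    · rintro (rfl | ⟨_, _, h⟩)
      · exact absurd h2 (lt_irrefl _)
      · exact h
    · exact fun h => Or.inr ⟨h1, h2, h⟩
  have memPt : ∀ c, 0 < c → c < 2*π → (c ∈ bset t L ↔ norm2pi (L + c) ∈ t) := by
    intro c h1 h2
    rw [mem_bset hOC hL1 hL2]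
    constructor
    · rintro (rfl | ⟨_, _, h⟩)
      · exact absurd h2 (lt_irrefl _)
      · exact h
    · exact fun h => Or.inr ⟨h1, h2, h⟩
  have memQt : ∀ c, 0 < c → c < 2*π → (c ∈ bset t r ↔ norm2pi (r + c) ∈ t) := by
    intro c h1 h2
    rw [mem_bset hOC hr1 hr2]
    constructor
    · rintro (rfl | ⟨_, _, h⟩)
      · exact absurd h2 (lt_irrefl _)
      · exact h
    · exact fun h => Or.inr ⟨h1, h2, h⟩
  -- toggle identities
  have htogr : ∀ c, 0 < c → c < 2*π → (norm2pi (r + c) = antip r ↔ c = π) := by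
    intro c h1 h2
    constructor
    · intro h
      have := norm2pi_inj (u := r + c) (v := r + π) (by rw [← antip]; exact h)
        (by rw [abs_sub_lt_iff]; constructor <;> linarith)
      linarith
    · rintro rfl; rfl
  have htogL : ∀ c, 0 < c → c < 2*π → (norm2pi (L + c) = antip r ↔ c = d + π) := by
    intro c h1 h2
    constructor
    · intro h
      have := norm2pi_inj (u := L + c) (v := L + (d + π)) (by rw [← haL]; exact h)
        (by rw [abs_sub_lt_iff]; constructor <;> linarith)
      linarith
    · rintro rfl; exact haL.symm
  -- primed characterizations
  have memQ' : ∀ c, 0 < c → c < 2*π → (c ∈ bset t r ↔ (c = π ∨ c ∈ bset s r)) := by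
    intro c h1 h2
    rw [memQt c h1 h2, ht, Finset.mem_insert, htogr c h1 h2, memQs c h1 h2]
  have memP' : ∀ c, 0 < c → c < 2*π → (c ∈ bset t L ↔ (c = d + π ∨ c ∈ bset s L)) := by
    intro c h1 h2
    rw [memPt c h1 h2, ht, Finset.mem_insert, htogL c h1 h2, memPs c h1 h2]
  have memQP : ∀ c, 0 < c → c + d < 2*π → (c ∈ bset s r ↔ c + d ∈ bset s L) := by
    intro c h1 h2
    have h2' : c < 2*π := by linarith
    rw [memQs c h1 h2', memPs (c + d) (by linarith) h2]
    rw [hrLn, norm2pi_add_norm2pi]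
    constructor
    · intro h; have e : L + d + c = L + (c + d) := by ring
      rwa [e] at h
    · intro h; have e : L + (c + d) = L + d + c := by ring
      rwa [e] at h
  -- extraction from L's leadership in s
  obtain ⟨m, hmP, hmQ, hmagree⟩ := extract (hL.2 r hr hrL)
  have hm1 : 0 < m := bset_pos hcirc hL1 hL2 hmP
  have hm2 : m < 2*π := by
    rcases lt_or_eq_of_le (bset_le hmP) with h | h
    · exact h
    · exact absurd (h ▸ two_pi_mem_bset s r) hmQ
  have hLt : L ∈ t := Finset.mem_insert_of_mem hL.1
  rcases lt_or_ge m π with hmπ | hπm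
  · -- easy case: L beats r in t at m
    have hxq : m ∈ bset t L := (memP' m hm1 hm2).mpr (Or.inr hmP)
    have hxp : m ∉ bset t r := by
      intro h
      rcases (memQ' m hm1 hm2).mp h with h | h
      · linarith
      · exact hmQ h
    have hagree : ∀ y, y < m → (y ∈ bset t r ↔ y ∈ bset t L) := by
      intro y hy
      rcases le_or_gt y 0 with hy0 | hy0
      · exact iff_of_false (fun h => absurd (bset_pos hOC hr1 hr2 h) (not_lt.mpr hy0))
          (fun h => absurd (bset_pos hOC hL1 hL2 h) (not_lt.mpr hy0))
      · have hy2 : y < 2*π := by linarith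
        constructor
        · intro h
          rcases (memQ' y hy0 hy2).mp h with rfl | h
          · linarith
          · exact (memP' y hy0 hy2).mpr (Or.inr ((hmagree y hy).mpr h))
        · intro h
          rcases (memP' y hy0 hy2).mp h with rfl | h
          · linarith
          · exact (memQ' y hy0 hy2).mpr (Or.inr ((hmagree y hy).mp h))
    exact lexlt_asymm (hlead.2 L hLt (Ne.symm hrL)) (beats hxq hxp hagree)
  · -- window case
    have hW : ∀ y, 0 < y → y < π → (y ∈ bset s L ↔ y ∈ bset s r) :=
      fun y h1 h2 => hmagree y (lt_of_lt_of_le h2 hπm)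
    have hπQ : π ∉ bset s r := by
      intro h
      exact ha (by rw [antip]; exact (memQs π hπ hπ2).mp h)
    have hdP : d ∈ bset s L := (memPs d hdne hd2π).mpr (hrLn ▸ hr)
    have hdQ : d ∈ bset s r := (hW d hdne hdπ).mp hdP
    set r₂ := norm2pi (r + d) with hr₂
    have hr₂s : r₂ ∈ s := (memQs d hdne hd2π).mp hdQ
    have hr₂1 : 0 ≤ r₂ := norm2pi_nonneg _
    have hr₂2 : r₂ < 2*π := norm2pi_lt _
    have hr₂r : r₂ ≠ r := by
      intro h
      have heq : norm2pi (r + d) = norm2pi r := by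
        rw [← hr₂, h, norm2pi_eq_self hr1 hr2]
      have := norm2pi_inj heq (by rw [abs_sub_lt_iff]; constructor <;> linarith)
      linarith
    have hr₂t : r₂ ∈ t := Finset.mem_insert_of_mem hr₂s
    have memQ₂ : ∀ c, 0 < c → c + d < 2*π → (c ∈ bset t r₂ ↔ c + d ∈ bset t r) := by
      intro c h1 h2
      have h2' : c < 2*π := by linarith
      rw [mem_bset hOC hr₂1 hr₂2]
      rw [memQt (c + d) (by linarith) h2]
      have e : norm2pi (r₂ + c) = norm2pi (r + (c + d)) := by
        rw [hr₂, norm2pi_add_norm2pi]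
        have e2 : r + d + c = r + (c + d) := by ring
        rw [e2]
      constructor
      · rintro (rfl | ⟨_, _, h⟩)
        · exact absurd h2' (lt_irrefl _)
        · rwa [e] at h
      · intro h
        exact Or.inr ⟨h1, h2', by rwa [← e] at h⟩
    by_cases hπP : π ∈ bset s L
    · -- CASE X
      obtain ⟨m', hm'Q', hm'P', hm'agree⟩ := extract (hlead.2 L hLt (Ne.symm hrL))
      have hm'1 : 0 < m' := bset_pos hOC hr1 hr2 hm'Q'
      have hm'2 : m' < 2*π := by
        rcases lt_or_eq_of_le (bset_le hm'Q') with h | h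
        · exact h
        · exact absurd (h ▸ two_pi_mem_bset t L) hm'P'
      have hπP' : π ∈ bset t L := (memP' π hπ hπ2).mpr (Or.inr hπP)
      have hm'π : m' ≠ π := fun h => hm'P' (h ▸ hπP')
      have hm'Q : m' ∈ bset s r := by
        rcases (memQ' m' hm'1 hm'2).mp hm'Q' with h | h
        · exact absurd h hm'π
        · exact h
      have hm'Pn : m' ∉ bset s L := fun h => hm'P' ((memP' m' hm'1 hm'2).mpr (Or.inr h))
      have hdπP' : d + π ∈ bset t L := (memP' (d + π) (by linarith) (by linarith)).mpr (Or.inl rfl)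
      have hm'dπ : m' ≠ d + π := fun h => hm'P' (h ▸ hdπP')
      have hπm' : π < m' := by
        rcases lt_trichotomy m' π with h | h | h
        · exact absurd ((hW m' hm'1 h).mpr hm'Q) hm'Pn
        · exact absurd h hm'π
        · exact h
      set w := m' - d with hw
      have hw1 : 0 < w := by rw [hw]; linarith
      have hwd : w + d = m' := by rw [hw]; ring
      have hwd2 : w + d < 2*π := by rw [hwd]; exact hm'2
      have hw2 : w < 2*π := by linarith
      have hwπ : w ≠ π := by
        intro h
        apply hm'dπ
        rw [← hwd, h]; ring
      have hxq : w ∈ bset t r₂ := (memQ₂ w hw1 hwd2).mpr (by rw [hwd]; exact hm'Q')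
      have hxp : w ∉ bset t r := by
        intro h
        rcases (memQ' w hw1 hw2).mp h with h | h
        · exact hwπ h
        · have := (memQP w hw1 hwd2).mp h
          rw [hwd] at this
          exact hm'Pn this
      have hagree : ∀ y, y < w → (y ∈ bset t r ↔ y ∈ bset t r₂) := by
        intro y hy
        rcases le_or_gt y 0 with hy0 | hy0
        · exact iff_of_false (fun h => absurd (bset_pos hOC hr1 hr2 h) (not_lt.mpr hy0))
            (fun h => absurd (bset_pos hOC hr₂1 hr₂2 h) (not_lt.mpr hy0))
        · have hy2 : y < 2*π := by linarith
          have hyd : y + d < m' := by rw [← hwd]; linarith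
          have hyd2 : y + d < 2*π := by linarith
          have hA : y ∈ bset t r₂ ↔ y + d ∈ bset t L := by
            rw [memQ₂ y hy0 hyd2]
            exact hm'agree (y + d) hyd
          have hB : y ∈ bset t r ↔ y + d ∈ bset t L := by
            by_cases hyπ : y = π
            · subst hyπ
              refine iff_of_true ((memQ' π hπ hπ2).mpr (Or.inl rfl)) ?_
              exact (memP' (π + d) (by linarith) (by linarith)).mpr (Or.inl (by ring))
            · rw [memQ' y hy0 hy2, memP' (y + d) (by linarith) hyd2]
              constructor
              · rintro (h | h)
                · exact absurd h hyπ
                · exact Or.inr ((memQP y hy0 hyd2).mp h)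
              · rintro (h | h)
                · exfalso; apply hyπ; linarith
                · exact Or.inr ((memQP y hy0 hyd2).mpr h)
          rw [hA, hB]
      exact lexlt_asymm (hlead.2 r₂ hr₂t hr₂r) (beats hxq hxp hagree)
    · -- CASE Y
      set w := π - d with hw
      have hw1 : 0 < w := by rw [hw]; linarith
      have hwd : w + d = π := by rw [hw]; ring
      have hwd2 : w + d < 2*π := by rw [hwd]; exact hπ2
      have hw2 : w < 2*π := by linarith
      have hxq : w ∈ bset t r₂ := by
        rw [memQ₂ w hw1 hwd2, hwd]
        exact (memQ' π hπ hπ2).mpr (Or.inl rfl)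
      have hxp : w ∉ bset t r := by
        intro h
        rcases (memQ' w hw1 hw2).mp h with h | h
        · rw [hw] at h; linarith
        · have := (memQP w hw1 hwd2).mp h
          rw [hwd] at this
          exact hπP this
      have hagree : ∀ y, y < w → (y ∈ bset t r ↔ y ∈ bset t r₂) := by
        intro y hy
        rcases le_or_gt y 0 with hy0 | hy0
        · exact iff_of_false (fun h => absurd (bset_pos hOC hr1 hr2 h) (not_lt.mpr hy0))
            (fun h => absurd (bset_pos hOC hr₂1 hr₂2 h) (not_lt.mpr hy0))
        · have hyπ : y < π := by linarith
          have hy2 : y < 2*π := by linarith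
          have hydπ : y + d < π := by rw [← hwd]; linarith
          have hyd2 : y + d < 2*π := by linarith
          have hydd2 : (y + d) + d < 2*π := by linarith
          have hA : y ∈ bset t r₂ ↔ (y + d) + d ∈ bset s L := by
            rw [memQ₂ y hy0 hyd2, memQ' (y + d) (by linarith) hyd2]
            constructor
            · rintro (h | h)
              · exfalso; linarith
              · exact (memQP (y + d) (by linarith) hydd2).mp h
            · intro h
              exact Or.inr ((memQP (y + d) (by linarith) hydd2).mpr h)
          have hB : y ∈ bset t r ↔ (y + d) + d ∈ bset s L := by
            rw [memQ' y hy0 hy2]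
            constructor
            · rintro (h | h)
              · exfalso; linarith
              · have h1 := (memQP y hy0 hyd2).mp h
                have h2 := (hW (y + d) (by linarith) hydπ).mp h1
                exact (memQP (y + d) (by linarith) hydd2).mp h2
            · intro h
              refine Or.inr ?_
              have h2 := (memQP (y + d) (by linarith) hydd2).mpr h
              have h1 := (hW (y + d) (by linarith) hydπ).mpr h2
              exact (memQP y hy0 hyd2).mpr h1
          rw [hA, hB]
      exact lexlt_asymm (hlead.2 r₂ hr₂t hr₂r) (beats hxq hxp hagree)


lemma main_erase (s : Finset ℝ) (hcirc : OnCircle s) (L r : ℝ) (hL : IsTrueLeader s L)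
    (hr : r ∈ s) (hrL : r ≠ L) (hdπ : cwAngle L r < π)
    (ha : antip r ∈ s) (hlead : IsTrueLeader (s.erase (antip r)) r) : False := by
  have hπ := Real.pi_pos
  have hπ2 : π < 2 * π := by linarith
  set d := cwAngle L r with hdd
  have hd0 : 0 ≤ d := cw_nonneg _ _
  obtain ⟨hL1, hL2⟩ := hcirc L hL.1
  obtain ⟨hr1, hr2⟩ := hcirc r hr
  have hrLn : r = norm2pi (L + d) := (add_cw L hr1 hr2).symm
  have hdne : 0 < d := by
    rcases lt_or_eq_of_le hd0 with h | h
    · exact h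
    · exfalso; apply hrL
      rw [hrLn, ← h, add_zero, norm2pi_eq_self hL1 hL2]
  have hd2π : d < 2 * π := by linarith
  have haL : antip r = norm2pi (L + (d + π)) := by
    rw [antip, hrLn, norm2pi_add_norm2pi, add_assoc]
  set t := s.erase (antip r) with ht
  have hOC : OnCircle t := fun x hx => hcirc x (Finset.mem_of_mem_erase hx)
  have memPs : ∀ c, 0 < c → c < 2*π → (c ∈ bset s L ↔ norm2pi (L + c) ∈ s) := by
    intro c h1 h2
    rw [mem_bset hcirc hL1 hL2]
    constructor
    · rintro (rfl | ⟨_, _, h⟩)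
      · exact absurd h2 (lt_irrefl _)
      · exact h
    · exact fun h => Or.inr ⟨h1, h2, h⟩
  have memQs : ∀ c, 0 < c → c < 2*π → (c ∈ bset s r ↔ norm2pi (r + c) ∈ s) := by
    intro c h1 h2
    rw [mem_bset hcirc hr1 hr2]
    constructor
    · rintro (rfl | ⟨_, _, h⟩)
      · exact absurd h2 (lt_irrefl _)
      · exact h
    · exact fun h => Or.inr ⟨h1, h2, h⟩
  have memPt : ∀ c, 0 < c → c < 2*π → (c ∈ bset t L ↔ norm2pi (L + c) ∈ t) := by
    intro c h1 h2
    rw [mem_bset hOC hL1 hL2]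
    constructor
    · rintro (rfl | ⟨_, _, h⟩)
      · exact absurd h2 (lt_irrefl _)
      · exact h
    · exact fun h => Or.inr ⟨h1, h2, h⟩
  have memQt : ∀ c, 0 < c → c < 2*π → (c ∈ bset t r ↔ norm2pi (r + c) ∈ t) := by
    intro c h1 h2
    rw [mem_bset hOC hr1 hr2]
    constructor
    · rintro (rfl | ⟨_, _, h⟩)
      · exact absurd h2 (lt_irrefl _)
      · exact h
    · exact fun h => Or.inr ⟨h1, h2, h⟩
  have htogr : ∀ c, 0 < c → c < 2*π → (norm2pi (r + c) = antip r ↔ c = π) := by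
    intro c h1 h2
    constructor
    · intro h
      have := norm2pi_inj (u := r + c) (v := r + π) (by rw [← antip]; exact h)
        (by rw [abs_sub_lt_iff]; constructor <;> linarith)
      linarith
    · rintro rfl; rfl
  have htogL : ∀ c, 0 < c → c < 2*π → (norm2pi (L + c) = antip r ↔ c = d + π) := by
    intro c h1 h2
    constructor
    · intro h
      have := norm2pi_inj (u := L + c) (v := L + (d + π)) (by rw [← haL]; exact h)
        (by rw [abs_sub_lt_iff]; constructor <;> linarith)
      linarith
    · rintro rfl; exact haL.symm
  have memQ' : ∀ c, 0 < c → c < 2*π → (c ∈ bset t r ↔ (c ≠ π ∧ c ∈ bset s r)) := by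
    intro c h1 h2
    rw [memQt c h1 h2, ht, Finset.mem_erase, memQs c h1 h2]
    constructor
    · rintro ⟨hne, h⟩
      exact ⟨fun hc => hne ((htogr c h1 h2).mpr hc), h⟩
    · rintro ⟨hne, h⟩
      exact ⟨fun hc => hne ((htogr c h1 h2).mp hc), h⟩
  have memP' : ∀ c, 0 < c → c < 2*π → (c ∈ bset t L ↔ (c ≠ d + π ∧ c ∈ bset s L)) := by
    intro c h1 h2
    rw [memPt c h1 h2, ht, Finset.mem_erase, memPs c h1 h2]
    constructor
    · rintro ⟨hne, h⟩
      exact ⟨fun hc => hne ((htogL c h1 h2).mpr hc), h⟩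
    · rintro ⟨hne, h⟩
      exact ⟨fun hc => hne ((htogL c h1 h2).mp hc), h⟩
  have haLne : antip r ≠ L := by
    intro h
    have heq : norm2pi (L + (d + π)) = norm2pi L := by
      rw [← haL, h, norm2pi_eq_self hL1 hL2]
    have := norm2pi_inj heq (by rw [abs_sub_lt_iff]; constructor <;> linarith)
    linarith
  have hLt : L ∈ t := Finset.mem_erase.mpr ⟨Ne.symm haLne, hL.1⟩
  obtain ⟨m, hmP, hmQ, hmagree⟩ := extract (hL.2 r hr hrL)
  have hm1 : 0 < m := bset_pos hcirc hL1 hL2 hmP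
  have hm2 : m < 2*π := by
    rcases lt_or_eq_of_le (bset_le hmP) with h | h
    · exact h
    · exact absurd (h ▸ two_pi_mem_bset s r) hmQ
  rcases lt_or_ge m π with hmπ | hπm
  · -- L beats r in t at m
    have hxq : m ∈ bset t L := (memP' m hm1 hm2).mpr ⟨by intro h; linarith, hmP⟩
    have hxp : m ∉ bset t r := fun h => hmQ ((memQ' m hm1 hm2).mp h).2
    have hagree : ∀ y, y < m → (y ∈ bset t r ↔ y ∈ bset t L) := by
      intro y hy
      rcases le_or_gt y 0 with hy0 | hy0
      · exact iff_of_false (fun h => absurd (bset_pos hOC hr1 hr2 h) (not_lt.mpr hy0))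
          (fun h => absurd (bset_pos hOC hL1 hL2 h) (not_lt.mpr hy0))
      · have hy2 : y < 2*π := by linarith
        rw [memQ' y hy0 hy2, memP' y hy0 hy2]
        constructor
        · rintro ⟨_, h⟩
          exact ⟨by intro hc; linarith, (hmagree y hy).mpr h⟩
        · rintro ⟨_, h⟩
          exact ⟨by intro hc; linarith, (hmagree y hy).mp h⟩
    exact lexlt_asymm (hlead.2 L hLt (Ne.symm hrL)) (beats hxq hxp hagree)
  · have hπQ : π ∈ bset s r := (memQs π hπ hπ2).mpr (by rw [← antip]; exact ha)
    by_cases hπP : π ∈ bset s L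
    · -- L beats r in t at π
      have hxq : π ∈ bset t L := (memP' π hπ hπ2).mpr ⟨by intro h; linarith, hπP⟩
      have hxp : π ∉ bset t r := fun h => ((memQ' π hπ hπ2).mp h).1 rfl
      have hagree : ∀ y, y < π → (y ∈ bset t r ↔ y ∈ bset t L) := by
        intro y hy
        rcases le_or_gt y 0 with hy0 | hy0
        · exact iff_of_false (fun h => absurd (bset_pos hOC hr1 hr2 h) (not_lt.mpr hy0))
            (fun h => absurd (bset_pos hOC hL1 hL2 h) (not_lt.mpr hy0))
        · have hy2 : y < 2*π := by linarith
          have hym : y < m := lt_of_lt_of_le hy hπm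
          rw [memQ' y hy0 hy2, memP' y hy0 hy2]
          constructor
          · rintro ⟨_, h⟩
            exact ⟨by intro hc; linarith, (hmagree y hym).mpr h⟩
          · rintro ⟨_, h⟩
            exact ⟨by intro hc; linarith, (hmagree y hym).mp h⟩
      exact lexlt_asymm (hlead.2 L hLt (Ne.symm hrL)) (beats hxq hxp hagree)
    · -- impossible: π ∈ Q \ P below/at m
      rcases lt_or_eq_of_le hπm with h | h
      · exact hπP ((hmagree π h).mpr hπQ)
      · exact hπP (h ▸ hmP)


end Stmt9

/-- an expected leader distinct from the true leader `L` lies at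
clockwise angular distance at least `π` from `L`. -/
theorem expected_leader_cwAngle_ge_pi
    (s : Finset ℝ) (hcirc : OnCircle s) (hasym : RotAsym s)
    (L : ℝ) (hL : IsTrueLeader s L)
    (r : ℝ) (hr : r ∈ s) (hrL : r ≠ L) (hexp : ExpectedLeader s r) :
    π ≤ cwAngle L r := by
  by_contra hcon
  push_neg at hcon
  have hnot : ¬ IsTrueLeader s r := by
    intro h
    exact Stmt9.lexlt_asymm (hL.2 r hr hrL) (h.2 L hL.1 (Ne.symm hrL))
  by_cases ha : antip r ∈ s
  · have hC1 : confC1 s r = s := Finset.insert_eq_self.mpr ha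
    rcases hexp with hsure | hconf
    · refine hnot ?_
      have := hsure.2.2 (by rw [hC1]; exact hasym)
      rwa [hC1] at this
    · obtain ⟨-, -, -, hxor⟩ := hconf
      unfold Xor' at hxor
      rcases hxor with ⟨h0, h1⟩ | ⟨h1, h0⟩
      · exact Stmt9.main_erase s hcirc L r hL hr hrL hcon ha h0
      · exact hnot (by rwa [hC1] at h1)
  · have hC0 : confC0 s r = s := by
      rw [confC0, Finset.erase_eq_of_notMem ha]
    rcases hexp with hsure | hconf
    · refine hnot ?_
      have := hsure.2.1 (by rw [hC0]; exact hasym)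
      rwa [hC0] at this
    · obtain ⟨-, -, -, hxor⟩ := hconf
      unfold Xor' at hxor
      rcases hxor with ⟨h0, h1⟩ | ⟨h1, h0⟩
      · exact hnot (by rwa [hC0] at h0)
      · exact Stmt9.main_insert s hcirc L r hL hr hrL hcon ha h1
end
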